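/- Let a = (a_0,...,a_n) be a strictly decreasing sequence of non-negative integers and let b = (b_0,...,b_r) be a subsequence of a (r ≤ n). Then every monomial of the Schur polynomial σ_b(x_0,...,x_r) is divisible by some monomial of the specialized Schur polynomial σ_a(x_0,...,x_r,1,...,1) obtained by setting the last n − r variables equal to 1. -/

import Mathlib

open MvPolynomial
open Classical

lemma prod_monomial_one {α σ : Type*} (s : Finset α) (g : α → (σ →₀ ℕ)) :
    (∏ c ∈ s, (monomial (g c) (1:ℤ))) = monomial (∑ c ∈ s, g c) 1 := by
  classical
  induction s using Finset.induction_on with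
  | empty => simp
  | insert _ _ h ih => simp [Finset.prod_insert h, Finset.sum_insert h, ih, monomial_mul]

lemma mem_support_sum_monomial {α σ : Type*} (s : Finset α) (w : α → (σ →₀ ℕ)) (d : σ →₀ ℕ) :
    d ∈ (∑ a ∈ s, (monomial (w a) (1:ℤ))).support ↔ ∃ a ∈ s, w a = d := by
  classical
  rw [MvPolynomial.mem_support_iff, MvPolynomial.coeff_sum]
  simp only [MvPolynomial.coeff_monomial]
  rw [Finset.sum_boole]
  simp [Finset.filter_eq_empty_iff]

lemma smono_le {m p : ℕ} {f : Fin m → Fin p} (hf : StrictMono f) (k : Fin m) : (k:ℕ) ≤ (f k : ℕ) := by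
  have key : ∀ K : ℕ, ∀ k : Fin m, (k:ℕ) = K → K ≤ (f k : ℕ) := by
    intro K
    induction K with
    | zero => intro k _; exact Nat.zero_le _
    | succ K ih =>
      intro k hk
      have hKm : K < m := by omega
      have h1 := ih ⟨K, hKm⟩ rfl
      have h2 : f ⟨K, hKm⟩ < f k := hf (by simp [Fin.lt_def]; omega)
      rw [Fin.lt_def] at h2
      omega
  exact key _ k rfl

lemma iota_bound {n r : ℕ} {ι : Fin (r + 1) → Fin (n + 1)} (hι : StrictMono ι)
    (k : Fin (r + 1)) : (ι k : ℕ) + (r - (k:ℕ)) ≤ n := by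
  have hg : StrictMono (fun k : Fin (r+1) => (ι k.rev).rev) := by
    intro k l hkl
    rw [Fin.rev_lt_rev]
    exact hι (by rwa [Fin.rev_lt_rev])
  have := smono_le hg k.rev
  simp only [Fin.rev_rev, Fin.val_rev] at this
  have h2 : (ι k : ℕ) ≤ n := (ι k).is_le
  omega

lemma key_bound (n r : ℕ) (hr : r ≤ n) (a : Fin (n + 1) → ℕ)
    (ha : ∀ i j : Fin (n + 1), i < j → a j < a i)
    (ι : Fin (r + 1) → Fin (n + 1)) (hι : StrictMono ι)
    (μa : YoungDiagram)
    (hμa : ∀ i : Fin (n + 1), μa.rowLen i = a i - (n - (i : ℕ)))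
    (hμa' : ∀ m : ℕ, n + 1 ≤ m → μa.rowLen m = 0)
    (μb : YoungDiagram)
    (hμb : ∀ i : Fin (r + 1), μb.rowLen i = a (ι i) - (r - (i : ℕ)))
    {i j : ℕ} (hp : (i, j) ∈ μa) (hnb : (i, j) ∉ μb) :
    r + 1 + (i - μb.colLen j) ≤ n := by
  rw [YoungDiagram.mem_iff_lt_rowLen] at hp
  have hin : i ≤ n := by
    by_contra h
    rw [hμa' i (by omega)] at hp; omega
  have hLb : μb.colLen j ≤ i := by
    by_contra h
    exact hnb (YoungDiagram.mem_iff_lt_colLen.mpr (by omega))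
  rcases lt_or_ge i (n - r) with hcase | hcase
  · omega
  · set k : ℕ := i - (n - r) with hk
    have hkr : k ≤ r := by omega
    have hik : (ι ⟨k, by omega⟩ : ℕ) ≤ i := by
      have := iota_bound hι ⟨k, by omega⟩; simp only at this; omega
    have hale : a ⟨i, by omega⟩ ≤ a (ι ⟨k, by omega⟩) := by
      rcases lt_or_eq_of_le hik with h | h
      · exact le_of_lt (ha _ _ (by rwa [Fin.lt_def]))
      · have : ι ⟨k, by omega⟩ = ⟨i, by omega⟩ := by apply Fin.ext; simpa using h
        rw [this]
    have hrla := hμa ⟨i, by omega⟩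
    have hrlb := hμb ⟨k, by omega⟩
    simp only at hrla hrlb
    have hkmem : (k, j) ∈ μb := by
      rw [YoungDiagram.mem_iff_lt_rowLen, hrlb]
      omega
    rw [YoungDiagram.mem_iff_lt_colLen] at hkmem
    omega

/-- The Schur polynomial in variables `x_0, …, x_n` associated to the Young
diagram `μ`, defined as a sum over semistandard fillings with entries in
`{0, …, n}`. -/
noncomputable def schurPoly (n : ℕ) (μ : YoungDiagram) :
    MvPolynomial (Fin (n + 1)) ℤ :=
  ∑ T ∈ Finset.univ.filter
      (fun T : μ.cells → Fin (n + 1) =>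
        (∀ c c' : μ.cells, (c : ℕ × ℕ).1 = (c' : ℕ × ℕ).1 →
          (c : ℕ × ℕ).2 ≤ (c' : ℕ × ℕ).2 → T c ≤ T c') ∧
        (∀ c c' : μ.cells, (c : ℕ × ℕ).2 = (c' : ℕ × ℕ).2 →
          (c : ℕ × ℕ).1 < (c' : ℕ × ℕ).1 → T c < T c')),
    ∏ c : μ.cells, X (T c)

/-- Substitution of `1` for the last `n - r` variables (variables with index
`> r` are sent to `1`, the others to themselves). -/
noncomputable def specializeLast (n r : ℕ) :
    MvPolynomial (Fin (n + 1)) ℤ →ₐ[ℤ] MvPolynomial (Fin (r + 1)) ℤ :=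
  aeval (fun i : Fin (n + 1) =>
    if h : (i : ℕ) < r + 1 then X ⟨(i : ℕ), h⟩ else 1)

lemma schur_eq (n : ℕ) (μ : YoungDiagram) :
    schurPoly n μ = ∑ T ∈ Finset.univ.filter
      (fun T : μ.cells → Fin (n + 1) =>
        (∀ c c' : μ.cells, (c : ℕ × ℕ).1 = (c' : ℕ × ℕ).1 →
          (c : ℕ × ℕ).2 ≤ (c' : ℕ × ℕ).2 → T c ≤ T c') ∧
        (∀ c c' : μ.cells, (c : ℕ × ℕ).2 = (c' : ℕ × ℕ).2 →
          (c : ℕ × ℕ).1 < (c' : ℕ × ℕ).1 → T c < T c')),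
      monomial (∑ c : μ.cells, Finsupp.single (T c) 1) (1:ℤ) := by
  rw [schurPoly]
  refine Finset.sum_congr rfl fun T _ => ?_
  rw [← prod_monomial_one]
  rfl

lemma specialize_schur_eq (n r : ℕ) (μ : YoungDiagram) :
    specializeLast n r (schurPoly n μ) = ∑ T ∈ Finset.univ.filter
      (fun T : μ.cells → Fin (n + 1) =>
        (∀ c c' : μ.cells, (c : ℕ × ℕ).1 = (c' : ℕ × ℕ).1 →
          (c : ℕ × ℕ).2 ≤ (c' : ℕ × ℕ).2 → T c ≤ T c') ∧
        (∀ c c' : μ.cells, (c : ℕ × ℕ).2 = (c' : ℕ × ℕ).2 →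
          (c : ℕ × ℕ).1 < (c' : ℕ × ℕ).1 → T c < T c')),
      monomial (∑ c : μ.cells,
        (if h : (T c : ℕ) < r + 1 then Finsupp.single (⟨(T c : ℕ), h⟩ : Fin (r+1)) 1 else 0)) (1:ℤ) := by
  rw [schurPoly, map_sum]
  refine Finset.sum_congr rfl fun T _ => ?_
  rw [map_prod, ← prod_monomial_one]
  refine Finset.prod_congr rfl fun c _ => ?_
  rw [specializeLast, aeval_X]
  split_ifs with h
  · rfl
  · simp

/-- If `b` is a subsequence of the strictly decreasing sequence `a`, then every
monomial of `σ_b(x_0,…,x_r)` is divisible by some monomial of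
`σ_a(x_0,…,x_r,1,…,1)`. -/
theorem stmt3 (n r : ℕ) (hr : r ≤ n) (a : Fin (n + 1) → ℕ)
    (ha : ∀ i j : Fin (n + 1), i < j → a j < a i)
    (ι : Fin (r + 1) → Fin (n + 1)) (hι : StrictMono ι)
    (μa : YoungDiagram)
    (hμa : ∀ i : Fin (n + 1), μa.rowLen i = a i - (n - (i : ℕ)))
    (hμa' : ∀ m : ℕ, n + 1 ≤ m → μa.rowLen m = 0)
    (μb : YoungDiagram)
    (hμb : ∀ i : Fin (r + 1), μb.rowLen i = a (ι i) - (r - (i : ℕ)))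
    (hμb' : ∀ m : ℕ, r + 1 ≤ m → μb.rowLen m = 0) :
    ∀ d ∈ (schurPoly r μb).support,
      ∃ e ∈ (specializeLast n r (schurPoly n μa)).support, e ≤ d := by
  intro d hd
  rw [schur_eq, mem_support_sum_monomial] at hd
  obtain ⟨T, hTmem, hTd⟩ := hd
  rw [Finset.mem_filter] at hTmem
  obtain ⟨-, hT1, hT2⟩ := hTmem
  have hrn : r + 1 ≤ n + 1 := by omega
  have hkey : ∀ c : μa.cells, (c : ℕ × ℕ) ∉ μb →
      r + 1 + ((c : ℕ × ℕ).1 - μb.colLen (c : ℕ × ℕ).2) < n + 1 := by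
    rintro ⟨⟨i, j⟩, hc⟩ hnb
    have hmem : (i, j) ∈ μa := (YoungDiagram.mem_cells _).mp hc
    have := key_bound n r hr a ha ι hι μa hμa hμa' μb hμb hmem hnb
    show r + 1 + (i - μb.colLen j) < n + 1
    omega
  set S : μa.cells → Fin (n + 1) := fun c =>
    if h : (c : ℕ × ℕ) ∈ μb then
      Fin.castLE hrn (T ⟨(c : ℕ × ℕ), (YoungDiagram.mem_cells _).mpr h⟩)
    else ⟨r + 1 + ((c : ℕ × ℕ).1 - μb.colLen (c : ℕ × ℕ).2), hkey c h⟩ with hS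
  have hS1 : ∀ c c' : μa.cells, (c : ℕ × ℕ).1 = (c' : ℕ × ℕ).1 →
      (c : ℕ × ℕ).2 ≤ (c' : ℕ × ℕ).2 → S c ≤ S c' := by
    rintro ⟨⟨i, j⟩, hc⟩ ⟨⟨i', j'⟩, hc'⟩ hrow hle
    simp only at hrow hle
    subst hrow
    rw [hS]
    dsimp only
    split_ifs with h1 h2 h2
    · rw [Fin.le_def]
      simp only [Fin.coe_castLE]
      exact hT1 ⟨(i, j), (YoungDiagram.mem_cells _).mpr h1⟩
        ⟨(i, j'), (YoungDiagram.mem_cells _).mpr h2⟩ rfl hle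
    · rw [Fin.le_def]
      simp only [Fin.coe_castLE]
      have := (T ⟨(i, j), (YoungDiagram.mem_cells _).mpr h1⟩).is_le
      omega
    · exact absurd (μb.up_left_mem (le_refl i) hle h2) h1
    · rw [Fin.le_def]
      simp only
      have := μb.colLen_anti _ _ hle
      omega
  have hS2 : ∀ c c' : μa.cells, (c : ℕ × ℕ).2 = (c' : ℕ × ℕ).2 →
      (c : ℕ × ℕ).1 < (c' : ℕ × ℕ).1 → S c < S c' := by
    rintro ⟨⟨i, j⟩, hc⟩ ⟨⟨i', j'⟩, hc'⟩ hcol hlt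
    simp only at hcol hlt
    subst hcol
    rw [hS]
    dsimp only
    split_ifs with h1 h2 h2
    · rw [Fin.lt_def]
      simp only [Fin.coe_castLE]
      exact hT2 ⟨(i, j), (YoungDiagram.mem_cells _).mpr h1⟩
        ⟨(i', j), (YoungDiagram.mem_cells _).mpr h2⟩ rfl hlt
    · rw [Fin.lt_def]
      simp only [Fin.coe_castLE]
      have := (T ⟨(i, j), (YoungDiagram.mem_cells _).mpr h1⟩).is_le
      omega
    · exact absurd (μb.up_left_mem (le_of_lt hlt) (le_refl j) h2) h1
    · rw [Fin.lt_def]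
      simp only
      have hc1 : μb.colLen j ≤ i := by
        by_contra h
        exact h1 (YoungDiagram.mem_iff_lt_colLen.mpr (by omega))
      omega
  set g : Fin (n + 1) → (Fin (r + 1) →₀ ℕ) := fun i =>
    if h : (i : ℕ) < r + 1 then Finsupp.single (⟨(i : ℕ), h⟩ : Fin (r+1)) 1 else 0 with hg
  refine ⟨∑ c : μa.cells, g (S c), ?_, ?_⟩
  · rw [specialize_schur_eq, mem_support_sum_monomial]
    exact ⟨S, Finset.mem_filter.mpr ⟨Finset.mem_univ _, hS1, hS2⟩, rfl⟩
  · set F : ℕ × ℕ → (Fin (r + 1) →₀ ℕ) := fun p =>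
      if hp : p ∈ μb then Finsupp.single (T ⟨p, (YoungDiagram.mem_cells _).mpr hp⟩) 1 else 0 with hF
    have hgF : ∀ c : μa.cells, g (S c) = F (c : ℕ × ℕ) := by
      intro c
      rw [hS, hF, hg]
      dsimp only
      split_ifs with h1 h2 h2
      · exact congrArg (fun v => Finsupp.single v 1) (Fin.ext (by simp))
      · exact absurd (by simp [Fin.coe_castLE]; exact Fin.is_le _ :
          (Fin.castLE hrn (T ⟨(c : ℕ × ℕ), (YoungDiagram.mem_cells _).mpr h1⟩) : Fin (n+1)).val < r + 1) h2
      · simp only [Fin.val_mk] at h2; omega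
      · rfl
    have he : (∑ c : μa.cells, g (S c)) = ∑ p ∈ μa.cells, F p := by
      rw [Finset.sum_congr rfl (fun c _ => hgF c)]
      exact Finset.sum_coe_sort μa.cells F
    have hd2 : d = ∑ p ∈ μb.cells, F p := by
      rw [← hTd, ← Finset.sum_coe_sort μb.cells F]
      refine Finset.sum_congr rfl fun c _ => ?_
      rw [hF]
      dsimp only
      rw [dif_pos ((YoungDiagram.mem_cells _).mp c.2)]
    rw [he, hd2]
    have step1 : (∑ p ∈ μa.cells, F p) = ∑ p ∈ μa.cells ∩ μb.cells, F p := by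
      refine (Finset.sum_subset (Finset.inter_subset_left) fun p hp hnp => ?_).symm
      rw [hF]
      dsimp only
      rw [dif_neg]
      intro hmem
      exact hnp (Finset.mem_inter.mpr ⟨hp, (YoungDiagram.mem_cells _).mpr hmem⟩)
    rw [step1]
    exact Finset.sum_le_sum_of_subset_of_nonneg Finset.inter_subset_right
      (fun p _ _ => by positivity)
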